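/- For every integer n ≥ 2, the total number of bubbles counted across all linear chord diagrams on 2n vertices satisfies ∑_{p=1}^{2n} B_{n,p} = (2n-2)!·(4n-5) / (2^{n-1}·(n-1)!). -/

import Mathlib

open Finset

/-- A linear chord diagram on `2*n` vertices: a fixed-point-free involution of `Fin (2*n)`.
Vertex `v ∈ {1,...,2n}` is represented by the index `v-1 : Fin (2*n)`. -/
def IsLCD (n : ℕ) (f : Fin (2*n) → Fin (2*n)) : Prop :=
  ∀ i, f (f i) = i ∧ f i ≠ i

/-- The chord `{i, i+1}` (1-based vertices) is a short chord of `f`. -/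
def IsShort (n : ℕ) (f : Fin (2*n) → Fin (2*n)) (i : ℕ) : Prop :=
  ∃ (_h1 : 1 ≤ i) (h2 : i < 2*n), f ⟨i-1, by omega⟩ = ⟨i, h2⟩

/-- The interval `[a,b] ⊆ {1,...,2n}` (1-based) is a bubble of the diagram `f`:
it contains no short chord, its left end is the start of the diagram or is preceded
by the short chord `{a-2,a-1}`, and its right end is the end of the diagram or is
followed by the short chord `{b+1,b+2}`. -/
def IsBubble (n : ℕ) (f : Fin (2*n) → Fin (2*n)) (a b : ℕ) : Prop :=
  1 ≤ a ∧ a ≤ b ∧ b ≤ 2*n ∧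
  (∀ i, a ≤ i → i + 1 ≤ b → ¬ IsShort n f i) ∧
  (a = 1 ∨ IsShort n f (a-2)) ∧
  (b = 2*n ∨ IsShort n f (b+1))

open scoped Classical in
/-- `B n p` : the number of pairs `(D, [a,b])` where `D` is a linear chord diagram on
`2n` vertices and `[a,b]` is a bubble of `D` of size `p = b - a + 1`. -/
noncomputable def B (n p : ℕ) : ℕ :=
  ((univ ×ˢ (Finset.Icc 1 (2*n) ×ˢ Finset.Icc 1 (2*n))).filter
    (fun x : (Fin (2*n) → Fin (2*n)) × ℕ × ℕ =>
      IsLCD n x.1 ∧ IsBubble n x.1 x.2.1 x.2.2 ∧ x.2.2 - x.2.1 + 1 = p)).card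

open scoped Classical in
/-- `d n s` : the number of linear chord diagrams on `2n` vertices having exactly `s`
short chords. -/
noncomputable def d (n s : ℕ) : ℕ :=
  (univ.filter (fun f : Fin (2*n) → Fin (2*n) =>
    IsLCD n f ∧ ((Finset.Icc 1 (2*n-1)).filter (fun i => IsShort n f i)).card = s)).card

open scoped Classical in
/-- `pathMatch m j` : the number of `j`-edge matchings of the path graph on `m` vertices
`{1,...,m}` with edges `{i,i+1}`, `1 ≤ i ≤ m-1`.  An edge is encoded by its left
endpoint; a set of edges is a matching iff no two left endpoints are consecutive. -/
noncomputable def pathMatch (m j : ℕ) : ℕ :=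
  (((Finset.Icc 1 (m-1)).powerset).filter
    (fun S => S.card = j ∧ ∀ i ∈ S, i + 1 ∉ S)).card

/-- The double factorial `(2m-1)!! = (2m)! / (2^m * m!)`, so `(-1)!! = 1`. -/
def doubleFact (m : ℕ) : ℕ := (2*m).factorial / (2^m * m.factorial)


open Finset

def M : ℕ → ℕ
  | 0 => 1
  | (k+1) => (2*k+1) * M k

section FPF
variable {α : Type*} [Fintype α] [DecidableEq α]

def FPF (f : α → α) : Prop := ∀ x, f (f x) = x ∧ f x ≠ x

open scoped Classical

noncomputable def restrictEquiv (u v : α) (huv : u ≠ v) :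
    {f : α → α // FPF f ∧ f u = v} ≃
      {g : {x : α // x ≠ u ∧ x ≠ v} → {x : α // x ≠ u ∧ x ≠ v} // FPF g} where
  toFun := fun ⟨f, hf, hu⟩ =>
    ⟨fun x => ⟨f x.1, by
        have hinv : f (f x.1) = x.1 := (hf x.1).1
        have hv : f v = u := by rw [← hu]; exact (hf u).1
        constructor
        · intro h
          rw [h] at hinv
          exact x.2.2 (by rw [← hinv, hu])
        · intro h
          rw [h] at hinv
          exact x.2.1 (by rw [← hinv, hv])⟩, by
      intro x
      exact ⟨Subtype.ext (hf x.1).1, fun h => (hf x.1).2 (congrArg Subtype.val h)⟩⟩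
  invFun := fun ⟨g, hg⟩ =>
    ⟨fun x => if h1 : x = u then v else if h2 : x = v then u else (g ⟨x, h1, h2⟩).1, by
      constructor
      · intro x
        by_cases h1 : x = u
        · subst h1
          simp [Ne.symm huv, huv]
        by_cases h2 : x = v
        · subst h2
          simp [Ne.symm huv, huv]
        · have hne1 : (g ⟨x, h1, h2⟩).1 ≠ u := (g ⟨x, h1, h2⟩).2.1
          have hne2 : (g ⟨x, h1, h2⟩).1 ≠ v := (g ⟨x, h1, h2⟩).2.2
          have hgg : g (g ⟨x, h1, h2⟩) = ⟨x, h1, h2⟩ := (hg ⟨x, h1, h2⟩).1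
          constructor
          · simp only [dif_neg h1, dif_neg h2, dif_neg hne1, dif_neg hne2]
            have : (⟨(g ⟨x, h1, h2⟩).1, hne1, hne2⟩ : {x : α // x ≠ u ∧ x ≠ v}) =
                g ⟨x, h1, h2⟩ := Subtype.ext rfl
            rw [this, hgg]
          · simp only [dif_neg h1, dif_neg h2]
            intro h
            exact (hg ⟨x, h1, h2⟩).2 (Subtype.ext h)
      · simp [huv]⟩
  left_inv := fun ⟨f, hf, hu⟩ => by
    apply Subtype.ext
    funext x
    simp only
    by_cases h1 : x = u
    · subst h1; simp [hu]
    by_cases h2 : x = v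
    · have hv : f v = u := by rw [← hu]; exact (hf u).1
      subst h2
      simp [h1, hv]
    · simp [h1, h2]
  right_inv := fun ⟨g, hg⟩ => by
    apply Subtype.ext
    funext x
    apply Subtype.ext
    simp only [dif_neg x.2.1, dif_neg x.2.2]

lemma card_ne_pair (u v : α) (huv : u ≠ v) :
    Fintype.card {x : α // x ≠ u ∧ x ≠ v} = Fintype.card α - 2 := by
  rw [Fintype.card_subtype]
  have : (univ.filter (fun x : α => x ≠ u ∧ x ≠ v)) = univ \ {u, v} := by
    ext x; simp [and_comm]
  rw [this, card_sdiff_of_subset (by simp)]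
  rw [card_univ, card_insert_of_notMem (by simp [huv]), card_singleton]

lemma card_fpf : ∀ (k : ℕ) (α : Type*) [Fintype α] [DecidableEq α],
    Fintype.card α = 2 * k → Fintype.card {f : α → α // FPF f} = M k := by
  intro k
  induction k with
  | zero =>
    intro α _ _ h
    have : IsEmpty α := Fintype.card_eq_zero_iff.mp (by omega)
    have : Unique {f : α → α // FPF f} :=
      { default := ⟨id, fun x => isEmptyElim x⟩
        uniq := fun f => Subtype.ext (funext fun x => isEmptyElim x) }
    simp [Fintype.card_unique, M]
  | succ k ih =>
    intro α _ _ h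
    have hne : Nonempty α := Fintype.card_pos_iff.mp (by omega)
    obtain ⟨a⟩ := hne
    have e := Equiv.sigmaFiberEquiv
      (fun f : {f : α → α // FPF f} => (⟨f.1 a, (f.2 a).2⟩ : {v : α // v ≠ a}))
    rw [← Fintype.card_congr e, Fintype.card_sigma]
    have key : ∀ v : {v : α // v ≠ a},
        Fintype.card {f : {f : α → α // FPF f} //
          (⟨f.1 a, (f.2 a).2⟩ : {v : α // v ≠ a}) = v} = M k := by
      intro v
      have e2 : {f : {f : α → α // FPF f} //
            (⟨f.1 a, (f.2 a).2⟩ : {v : α // v ≠ a}) = v} ≃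
          {f : α → α // FPF f ∧ f a = v.1} :=
        (Equiv.subtypeEquivRight (fun f => by
          rw [Subtype.ext_iff])).trans
          (Equiv.subtypeSubtypeEquivSubtypeInter FPF (fun f => f a = v.1))
      rw [Fintype.card_congr e2,
        Fintype.card_congr (restrictEquiv a v.1 (Ne.symm v.2))]
      refine ih {x : α // x ≠ a ∧ x ≠ v.1} ?_
      rw [card_ne_pair a v.1 (Ne.symm v.2), h]
      omega
    rw [Finset.sum_congr rfl (fun v _ => key v), Finset.sum_const, smul_eq_mul]
    have hcard : Fintype.card {v : α // v ≠ a} = 2 * k + 1 := by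
      rw [Fintype.card_subtype]
      have : (univ.filter (fun x : α => x ≠ a)) = univ \ {a} := by ext; simp
      rw [this, card_sdiff_of_subset (by simp), card_univ, card_singleton, h]
      omega
    rw [Finset.card_univ, hcard]
    rfl

lemma card_fpf_cond (u v : α) (huv : u ≠ v) {k : ℕ}
    (h : Fintype.card α = 2 * k + 2) :
    Fintype.card {f : α → α // FPF f ∧ f u = v} = M k := by
  rw [Fintype.card_congr (restrictEquiv u v huv)]
  refine card_fpf k {x : α // x ≠ u ∧ x ≠ v} ?_
  rw [card_ne_pair u v huv, h]
  omega

end FPF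

section FPF2
variable {α : Type*} [Fintype α] [DecidableEq α]
open scoped Classical

lemma card_fpf_cond2 (u1 v1 u2 v2 : α)
    (h11 : u1 ≠ v1) (h22 : u2 ≠ v2) (h1 : u2 ≠ u1) (h2 : u2 ≠ v1)
    (h3 : v2 ≠ u1) (h4 : v2 ≠ v1) {k : ℕ}
    (hcard : Fintype.card α = 2 * k + 4) :
    Fintype.card {f : α → α // FPF f ∧ f u1 = v1 ∧ f u2 = v2} = M k := by
  have e1 : {f : α → α // FPF f ∧ f u1 = v1 ∧ f u2 = v2} ≃
      {f : {f : α → α // FPF f ∧ f u1 = v1} // f.1 u2 = v2} :=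
    (Equiv.subtypeEquivRight (fun f => by tauto)).trans
      (Equiv.subtypeSubtypeEquivSubtypeInter
        (fun f : α → α => FPF f ∧ f u1 = v1) (fun f => f u2 = v2)).symm
  have e2 : {f : {f : α → α // FPF f ∧ f u1 = v1} // f.1 u2 = v2} ≃
      {g : {g : {x : α // x ≠ u1 ∧ x ≠ v1} → {x : α // x ≠ u1 ∧ x ≠ v1} // FPF g} //
        g.1 ⟨u2, h1, h2⟩ = ⟨v2, h3, h4⟩} := by
    refine Equiv.subtypeEquiv (restrictEquiv u1 v1 h11) (fun f => ?_)
    obtain ⟨f, hf, hu⟩ := f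
    simp [restrictEquiv, Subtype.ext_iff]
  have e3 : {g : {g : {x : α // x ≠ u1 ∧ x ≠ v1} → {x : α // x ≠ u1 ∧ x ≠ v1} // FPF g} //
        g.1 ⟨u2, h1, h2⟩ = ⟨v2, h3, h4⟩} ≃
      {g : {x : α // x ≠ u1 ∧ x ≠ v1} → {x : α // x ≠ u1 ∧ x ≠ v1} //
        FPF g ∧ g ⟨u2, h1, h2⟩ = ⟨v2, h3, h4⟩} :=
    Equiv.subtypeSubtypeEquivSubtypeInter
      (α := {x : α // x ≠ u1 ∧ x ≠ v1} → {x : α // x ≠ u1 ∧ x ≠ v1}) FPF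
      (fun g => g ⟨u2, h1, h2⟩ = ⟨v2, h3, h4⟩)
  rw [Fintype.card_congr ((e1.trans e2).trans e3)]
  refine card_fpf_cond _ _ (fun h => h22 (congrArg Subtype.val h)) ?_
  rw [card_ne_pair u1 v1 h11, hcard]
  omega

end FPF2

section BubbleLemmas

open scoped Classical

variable {n : ℕ}

lemma isShort_bounds {f : Fin (2*n) → Fin (2*n)} {i : ℕ} (h : IsShort n f i) :
    1 ≤ i ∧ i < 2*n := by
  obtain ⟨h1, h2, -⟩ := h; exact ⟨h1, h2⟩

lemma not_short_adjacent {f : Fin (2*n) → Fin (2*n)} (hf : IsLCD n f) {i : ℕ}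
    (h : IsShort n f i) (h' : IsShort n f (i+1)) : False := by
  obtain ⟨h1, h2, hs⟩ := h
  obtain ⟨h1', h2', hs'⟩ := h'
  have e1 : f ⟨i, h2⟩ = ⟨i - 1, by omega⟩ := by
    rw [← hs]; exact (hf _).1
  have e2 : f ⟨i, h2⟩ = ⟨i+1, h2'⟩ := hs'
  rw [e1] at e2
  have := congrArg Fin.val e2
  simp only at this
  omega

lemma bubble_not_short_left {f : Fin (2*n) → Fin (2*n)} (hf : IsLCD n f) {a b : ℕ}
    (h : IsBubble n f a b) : ¬ IsShort n f a := by
  intro hs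
  obtain ⟨ha1, hab, hb, hint, -, hright⟩ := h
  by_cases hab' : a + 1 ≤ b
  · exact hint a le_rfl hab' hs
  · have hba : b = a := by omega
    rcases hright with h2n | hsb
    · have := isShort_bounds hs; omega
    · rw [hba] at hsb
      exact not_short_adjacent hf hs hsb

lemma bubble_right_unique {f : Fin (2*n) → Fin (2*n)} (hf : IsLCD n f) {a b b' : ℕ}
    (h : IsBubble n f a b) (h' : IsBubble n f a b') : b = b' := by
  have aux : ∀ b b', IsBubble n f a b → IsBubble n f a b' → b < b' → False := by
    intro b b' h h' hlt
    obtain ⟨ha1, hab, hb, hint, -, hright⟩ := h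
    obtain ⟨-, hab', hb', hint', -, hright'⟩ := h'
    rcases hright with h2n | hsb
    · omega
    · by_cases hbb : b + 2 ≤ b'
      · exact hint' (b+1) (by omega) (by omega) hsb
      · have hbe : b' = b + 1 := by omega
        rcases hright' with h2n' | hsb'
        · have := isShort_bounds hsb; omega
        · rw [hbe] at hsb'
          exact not_short_adjacent hf hsb hsb'
  rcases lt_trichotomy b b' with hlt | he | hlt
  · exact absurd (aux b b' h h' hlt) not_false
  · exact he
  · exact absurd (aux b' b h' h hlt) not_false

lemma exists_bubble {f : Fin (2*n) → Fin (2*n)} (hf : IsLCD n f) {a : ℕ}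
    (ha1 : 1 ≤ a) (ha2 : a ≤ 2*n) (hleft : a = 1 ∨ IsShort n f (a-2))
    (hns : ¬ IsShort n f a) : ∃ b, IsBubble n f a b := by
  set S : Finset ℕ := (Finset.Icc a (2*n)).filter (fun i => IsShort n f i) with hS
  by_cases hSne : S.Nonempty
  · set m := S.min' hSne with hm
    have hmm : m ∈ S := S.min'_mem hSne
    rw [hS, Finset.mem_filter, Finset.mem_Icc] at hmm
    have hma : a + 1 ≤ m := by
      rcases Nat.eq_or_lt_of_le hmm.1.1 with he | hlt
      · exact absurd (he ▸ hmm.2) hns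
      · omega
    refine ⟨m - 1, ha1, by omega, by omega, ?_, hleft, Or.inr ?_⟩
    · intro i hai hib hsi
      have hiS : i ∈ S := by
        rw [hS, Finset.mem_filter, Finset.mem_Icc]
        exact ⟨⟨hai, by have := isShort_bounds hsi; omega⟩, hsi⟩
      have := S.min'_le i hiS
      omega
    · have : m - 1 + 1 = m := by omega
      rw [this]
      exact hmm.2
  · refine ⟨2*n, ha1, ha2, le_rfl, ?_, hleft, Or.inl rfl⟩
    intro i hai hib hsi
    apply hSne
    refine ⟨i, ?_⟩
    rw [hS, Finset.mem_filter, Finset.mem_Icc]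
    exact ⟨⟨hai, by have := isShort_bounds hsi; omega⟩, hsi⟩

end BubbleLemmas

section CountLemmas

open scoped Classical

variable {n : ℕ}

lemma isShort_iff {f : Fin (2*n) → Fin (2*n)} {i : ℕ} (h1 : 1 ≤ i) (h2 : i < 2*n) :
    IsShort n f i ↔ f ⟨i-1, by omega⟩ = ⟨i, h2⟩ := by
  constructor
  · rintro ⟨h1x, h2x, hs⟩; exact hs
  · intro h; exact ⟨h1, h2, h⟩

lemma cardLCD : (univ.filter (fun f : Fin (2*n) → Fin (2*n) => IsLCD n f)).card = M n := by
  rw [← Fintype.card_subtype]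
  exact card_fpf n _ (by simp)

lemma cardShort {i : ℕ} (h1 : 1 ≤ i) (h2 : i < 2*n) :
    (univ.filter (fun f : Fin (2*n) → Fin (2*n) => IsLCD n f ∧ IsShort n f i)).card
      = M (n-1) := by
  rw [← Fintype.card_subtype]
  have e : {f : Fin (2*n) → Fin (2*n) // IsLCD n f ∧ IsShort n f i} ≃
      {f : Fin (2*n) → Fin (2*n) // FPF f ∧ f ⟨i-1, by omega⟩ = ⟨i, h2⟩} :=
    Equiv.subtypeEquivRight (fun f => by rw [isShort_iff h1 h2]; exact Iff.rfl)
  rw [Fintype.card_congr e]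
  refine card_fpf_cond _ _ (fun h => ?_) (by simp; omega)
  have := congrArg Fin.val h
  simp only at this
  omega

lemma cardShort2 {i : ℕ} (h1 : 1 ≤ i) (h2 : i + 3 ≤ 2*n) :
    (univ.filter (fun f : Fin (2*n) → Fin (2*n) =>
      IsLCD n f ∧ IsShort n f i ∧ IsShort n f (i+2))).card = M (n-2) := by
  rw [← Fintype.card_subtype]
  have hi2 : i + 2 < 2*n := by omega
  have e : {f : Fin (2*n) → Fin (2*n) // IsLCD n f ∧ IsShort n f i ∧ IsShort n f (i+2)} ≃
      {f : Fin (2*n) → Fin (2*n) // FPF f ∧ f ⟨i-1, by omega⟩ = ⟨i, by omega⟩ ∧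
        f ⟨i+2-1, by omega⟩ = ⟨i+2, hi2⟩} :=
    Equiv.subtypeEquivRight (fun f => by
      rw [isShort_iff h1 (by omega), isShort_iff (i := i+2) (by omega) hi2]
      exact Iff.rfl)
  rw [Fintype.card_congr e]
  refine card_fpf_cond2 _ _ _ _ ?_ ?_ ?_ ?_ ?_ ?_ (by simp; omega) <;>
    · intro h
      have := congrArg Fin.val h
      simp only at this
      omega

end CountLemmas

section NaLemmas

lemma split_card {γ : Type*} (s : Finset γ) (P Q : γ → Prop) [DecidablePred P]
    [DecidablePred (fun x => P x ∧ Q x)] [DecidablePred (fun x => P x ∧ ¬ Q x)] :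
    (s.filter (fun x => P x ∧ Q x)).card + (s.filter (fun x => P x ∧ ¬ Q x)).card
      = (s.filter P).card := by
  classical
  have h1 : s.filter (fun x => P x ∧ Q x) = (s.filter P).filter (fun x => Q x) := by
    ext x; simp [Finset.mem_filter, and_assoc]
  have h2 : s.filter (fun x => P x ∧ ¬ Q x) = (s.filter P).filter (fun x => ¬ Q x) := by
    ext x; simp [Finset.mem_filter, and_assoc]
  rw [h1, h2, Finset.card_filter_add_card_filter_not]

open scoped Classical in
noncomputable def Na (n a : ℕ) : ℕ :=
  (univ.filter (fun f : Fin (2*n) → Fin (2*n) =>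
    IsLCD n f ∧ (a = 1 ∨ IsShort n f (a-2)) ∧ ¬ IsShort n f a)).card

section

open scoped Classical

variable {n : ℕ}

lemma Na_one (hn : 2 ≤ n) : Na n 1 + M (n-1) = M n := by
  have h1 : Na n 1 = (univ.filter (fun f : Fin (2*n) → Fin (2*n) =>
      IsLCD n f ∧ ¬ IsShort n f 1)).card := by
    unfold Na
    congr 1
    apply Finset.filter_congr
    intro f _
    simp
  have h2 : (univ.filter (fun f : Fin (2*n) → Fin (2*n) => IsLCD n f ∧ IsShort n f 1)).card
      + (univ.filter (fun f : Fin (2*n) → Fin (2*n) => IsLCD n f ∧ ¬ IsShort n f 1)).card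
      = (univ.filter (fun f : Fin (2*n) → Fin (2*n) => IsLCD n f)).card :=
    split_card univ (fun f => IsLCD n f) (fun f => IsShort n f 1)
  rw [cardShort le_rfl (by omega), cardLCD] at h2
  omega

lemma Na_two : Na n 2 = 0 := by
  unfold Na
  rw [Finset.card_eq_zero, Finset.filter_eq_empty_iff]
  rintro f - ⟨-, h, -⟩
  rcases h with h | h
  · omega
  · have := isShort_bounds h; omega

lemma Na_mid (hn : 2 ≤ n) {a : ℕ} (h3 : 3 ≤ a) (h2 : a ≤ 2*n-1) :
    Na n a + M (n-2) = M (n-1) := by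
  have key : (univ.filter (fun f : Fin (2*n) → Fin (2*n) =>
        (IsLCD n f ∧ IsShort n f (a-2)) ∧ IsShort n f a)).card
      + (univ.filter (fun f : Fin (2*n) → Fin (2*n) =>
        (IsLCD n f ∧ IsShort n f (a-2)) ∧ ¬ IsShort n f a)).card
      = (univ.filter (fun f : Fin (2*n) → Fin (2*n) =>
        IsLCD n f ∧ IsShort n f (a-2))).card :=
    split_card univ (fun f => IsLCD n f ∧ IsShort n f (a-2)) (fun f => IsShort n f a)
  have e1 : (univ.filter (fun f : Fin (2*n) → Fin (2*n) =>
      (IsLCD n f ∧ IsShort n f (a-2)) ∧ IsShort n f a)).card = M (n-2) := by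
    rw [← cardShort2 (i := a-2) (by omega) (by omega)]
    apply congrArg
    apply Finset.filter_congr
    intro f _
    have hae : a - 2 + 2 = a := by omega
    rw [hae]
    constructor
    · rintro ⟨⟨hl, hs⟩, hs'⟩; exact ⟨hl, hs, hs'⟩
    · rintro ⟨hl, hs, hs'⟩; exact ⟨⟨hl, hs⟩, hs'⟩
  have e2 : (univ.filter (fun f : Fin (2*n) → Fin (2*n) =>
      (IsLCD n f ∧ IsShort n f (a-2)) ∧ ¬ IsShort n f a)).card = Na n a := by
    unfold Na
    apply congrArg
    apply Finset.filter_congr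
    intro f _
    constructor
    · rintro ⟨⟨hl, hs⟩, hs'⟩; exact ⟨hl, Or.inr hs, hs'⟩
    · rintro ⟨hl, hor, hs'⟩
      rcases hor with h | h
      · omega
      · exact ⟨⟨hl, h⟩, hs'⟩
  rw [e1, e2, cardShort (i := a-2) (by omega) (by omega)] at key
  omega

lemma Na_last (hn : 2 ≤ n) : Na n (2*n) = M (n-1) := by
  rw [← cardShort (i := 2*n-2) (by omega) (by omega)]
  unfold Na
  apply congrArg
  apply Finset.filter_congr
  intro f _
  constructor
  · rintro ⟨hl, hor, -⟩
    rcases hor with h | h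
    · omega
    · exact ⟨hl, h⟩
  · rintro ⟨hl, hs⟩
    refine ⟨hl, Or.inr hs, fun hc => ?_⟩
    have := isShort_bounds hc; omega

end
end NaLemmas

lemma M_succ (k : ℕ) : M (k+1) = (2*k+1) * M k := rfl

lemma castM (m : ℕ) : ((2*m).factorial : ℚ) = 2^m * (m.factorial : ℚ) * M m := by
  induction m with
  | zero => simp [M]
  | succ m ih =>
    have h2 : 2*(m+1) = (2*m+1)+1 := by ring
    rw [h2, Nat.factorial_succ, Nat.factorial_succ (2*m), Nat.factorial_succ m, M_succ]
    push_cast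
    rw [show ((2*m).factorial :ℚ) = 2 ^ m * ↑m.factorial * ↑(M m) from ih]
    ring


/-- For every `n ≥ 2`, the total number of bubbles across all linear chord diagrams on
`2n` vertices is `(2n-2)!·(4n-5) / (2^{n-1}·(n-1)!)`. -/
theorem total_bubbles (n : ℕ) (hn : 2 ≤ n) :
    (∑ p ∈ Finset.Icc 1 (2*n), (B n p : ℚ)) =
      (((2*n-2).factorial * (4*n-5) : ℕ) : ℚ) /
        ((2^(n-1) * (n-1).factorial : ℕ) : ℚ) := by
  classical
  set T := ((univ ×ˢ (Finset.Icc 1 (2*n) ×ˢ Finset.Icc 1 (2*n))).filter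
    (fun x : (Fin (2*n) → Fin (2*n)) × ℕ × ℕ =>
      IsLCD n x.1 ∧ IsBubble n x.1 x.2.1 x.2.2)) with hT
  have hmemT : ∀ x ∈ T, 1 ≤ x.2.1 ∧ x.2.1 ≤ x.2.2 ∧ x.2.2 ≤ 2*n ∧ IsLCD n x.1 ∧
      IsBubble n x.1 x.2.1 x.2.2 := by
    intro x hx
    rw [hT, Finset.mem_filter] at hx
    obtain ⟨hmem, hl, hb⟩ := hx
    exact ⟨hb.1, hb.2.1, hb.2.2.1, hl, hb⟩
  -- Step A
  have hBp : ∀ p, B n p = (T.filter (fun x => x.2.2 - x.2.1 + 1 = p)).card := by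
    intro p
    rw [hT, Finset.filter_filter]
    unfold B
    apply congrArg
    apply Finset.filter_congr
    intro x _
    constructor
    · rintro ⟨h1, h2, h3⟩; exact ⟨⟨h1, h2⟩, h3⟩
    · rintro ⟨⟨h1, h2⟩, h3⟩; exact ⟨h1, h2, h3⟩
  have hsum : ∑ p ∈ Finset.Icc 1 (2*n), B n p = T.card := by
    rw [Finset.card_eq_sum_card_fiberwise
      (f := fun x : (Fin (2*n) → Fin (2*n)) × ℕ × ℕ => x.2.2 - x.2.1 + 1)
      (t := Finset.Icc 1 (2*n)) (fun x hx => by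
        have := hmemT x hx
        show x.2.2 - x.2.1 + 1 ∈ Finset.Icc 1 (2*n)
        rw [Finset.mem_Icc]; omega)]
    exact Finset.sum_congr rfl (fun p _ => hBp p)
  -- Step B/C
  have hfib : T.card = ∑ a ∈ Finset.Icc 1 (2*n), (T.filter (fun x => x.2.1 = a)).card :=
    Finset.card_eq_sum_card_fiberwise (fun x hx => by
      have := hmemT x hx
      show x.2.1 ∈ Finset.Icc 1 (2*n)
      rw [Finset.mem_Icc]; omega)
  have hNa : ∀ a ∈ Finset.Icc 1 (2*n), (T.filter (fun x => x.2.1 = a)).card = Na n a := by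
    intro a ha
    rw [Finset.mem_Icc] at ha
    unfold Na
    apply Finset.card_bij (fun x _ => x.1)
    · intro x hx
      rw [Finset.mem_filter] at hx
      obtain ⟨hxT, hxa⟩ := hx
      obtain ⟨h1, h2, h3, hl, hb⟩ := hmemT x hxT
      rw [Finset.mem_filter]
      refine ⟨Finset.mem_univ _, hl, ?_, ?_⟩
      · rw [← hxa]; exact hb.2.2.2.2.1
      · rw [← hxa]; exact bubble_not_short_left hl hb
    · intro x hx x' hx' hxx
      rw [Finset.mem_filter] at hx hx'
      obtain ⟨hxT, hxa⟩ := hx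
      obtain ⟨hxT', hxa'⟩ := hx'
      obtain ⟨-, -, -, hl, hb⟩ := hmemT x hxT
      obtain ⟨-, -, -, hl', hb'⟩ := hmemT x' hxT'
      rw [hxx] at hb
      have ha2 : x.2.1 = x'.2.1 := by rw [hxa, hxa']
      rw [ha2] at hb
      have hbeq : x.2.2 = x'.2.2 := bubble_right_unique hl' hb hb'
      exact Prod.ext hxx (Prod.ext ha2 hbeq)
    · intro f hf
      rw [Finset.mem_filter] at hf
      obtain ⟨-, hl, hleft, hns⟩ := hf
      obtain ⟨b, hb⟩ := exists_bubble hl ha.1 ha.2 hleft hns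
      refine ⟨(f, a, b), ?_, rfl⟩
      rw [Finset.mem_filter, hT, Finset.mem_filter]
      refine ⟨⟨?_, hl, hb⟩, rfl⟩
      rw [Finset.mem_product, Finset.mem_product, Finset.mem_Icc, Finset.mem_Icc]
      have h1 : 1 ≤ a := hb.1
      have h2 : a ≤ b := hb.2.1
      have h3 : b ≤ 2*n := hb.2.2.1
      refine ⟨Finset.mem_univ _, ⟨ha, ?_⟩⟩
      show 1 ≤ b ∧ b ≤ 2*n
      omega
  -- assemble in ℚ
  have hcast : (∑ p ∈ Finset.Icc 1 (2*n), (B n p : ℚ)) = (T.card : ℚ) := by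
    rw [← hsum]; push_cast; rfl
  rw [hcast, hfib, Finset.sum_congr rfl hNa]
  have hins : Finset.Icc 1 (2*n) = insert 1 (insert 2 (insert (2*n) (Finset.Icc 3 (2*n-1)))) := by
    ext x
    simp only [Finset.mem_insert, Finset.mem_Icc]
    omega
  rw [hins, Finset.sum_insert (by simp only [Finset.mem_insert, Finset.mem_Icc]; omega),
    Finset.sum_insert (by simp only [Finset.mem_insert, Finset.mem_Icc]; omega),
    Finset.sum_insert (by simp only [Finset.mem_Icc]; omega)]
  push_cast
  -- cast facts
  have c1 : (Na n 1 : ℚ) + M (n-1) = M n := by exact_mod_cast Na_one hn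
  have c2 : (Na n 2 : ℚ) = 0 := by rw [Na_two]; norm_num
  have c3 : (Na n (2*n) : ℚ) = M (n-1) := by exact_mod_cast Na_last hn
  have c4 : ∑ a ∈ Finset.Icc 3 (2*n-1), (Na n a : ℚ)
      = ((2*n-3 : ℕ) : ℚ) * ((M (n-1) : ℚ) - (M (n-2) : ℚ)) := by
    have step : ∀ a ∈ Finset.Icc 3 (2*n-1),
        (Na n a : ℚ) = (M (n-1) : ℚ) - (M (n-2) : ℚ) := by
      intro a ha
      rw [Finset.mem_Icc] at ha
      have h := Na_mid hn ha.1 ha.2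
      have h' : (Na n a : ℚ) + M (n-2) = M (n-1) := by exact_mod_cast h
      linarith
    rw [Finset.sum_congr rfl step, Finset.sum_const, Nat.card_Icc, nsmul_eq_mul,
      show 2*n - 1 + 1 - 3 = 2*n - 3 from by omega]
  rw [c2, c3, c4]
  -- arithmetic finish
  have hn1 : ((n-1 : ℕ) : ℚ) = (n : ℚ) - 1 := by
    rw [Nat.cast_sub (by omega)]; norm_num
  have hn2 : ((n-2 : ℕ) : ℚ) = (n : ℚ) - 2 := by
    rw [Nat.cast_sub (by omega)]; norm_num
  have h2n3 : ((2*n-3 : ℕ) : ℚ) = 2*(n:ℚ) - 3 := by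
    rw [Nat.cast_sub (by omega)]; push_cast; ring
  have h4n5 : ((4*n-5 : ℕ) : ℚ) = 4*(n:ℚ) - 5 := by
    rw [Nat.cast_sub (by omega)]; push_cast; ring
  have hMn : (M n : ℚ) = (2*(n:ℚ) - 1) * M (n-1) := by
    have e : M n = (2*(n-1)+1) * M (n-1) := by
      conv_lhs => rw [show n = (n-1)+1 by omega]
      rw [M_succ]
    rw [e]
    push_cast [hn1]
    ring
  have hMn1 : (M (n-1) : ℚ) = (2*(n:ℚ) - 3) * M (n-2) := by
    have e : M (n-1) = (2*(n-2)+1) * M (n-2) := by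
      conv_lhs => rw [show n-1 = (n-2)+1 by omega]
      rw [M_succ]
    rw [e]
    push_cast [hn2]
    ring
  -- RHS
  rw [show 2*n-2 = 2*(n-1) from by omega]
  push_cast [castM (n-1), h4n5]
  rw [eq_div_iff (by positivity : (2:ℚ)^(n-1) * ((n-1).factorial : ℚ) ≠ 0)]
  have hNa1 : (Na n 1 : ℚ) = (M n : ℚ) - M (n-1) := by linarith
  rw [hNa1, hMn, hMn1, h2n3]
  ring
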